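/- Let θ be an involutive automorphism of a compact semisimple Lie algebra u, with eigenspace decomposition u = k ⊕ m (k = u^θ). Then g_θ = k ⊕ i m is a real form of g = u ⊗ ℂ: it is a real Lie subalgebra of g whose complexification is g, and θ restricted to g_θ is a Cartan involution on it (i.e., the bilinear form −B(X, θ(X)) is positive definite on g_θ, where B is the Killing form). -/

import Mathlib

/-- Let `u` be a compact real form of the complex semisimple Lie algebra `g`
(a real subalgebra with `u ∩ iu = 0`, `u + iu = g`, on which the Killing form is
negative definite), and let `θ` be an involutive automorphism of `u` (extended
ℂ-linearly to `g`), with eigenspaces `k = u^θ` and `m` (the `−1`-eigenspace in `u`).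
Then `g_θ = k ⊕ i·m` is a real form of `g`: it is a real Lie subalgebra whose
complexification is `g` (`g_θ ∩ i·g_θ = 0`, `g_θ + i·g_θ = g`), and `θ` restricted to
`g_θ` is a Cartan involution: `−B(X, θX)` is positive definite on `g_θ` (equivalently
`B(X, θX)` is real and negative for `0 ≠ X ∈ g_θ`). -/
theorem compact_involution_gives_real_form_with_cartan_involution
    {g : Type*} [LieRing g] [LieAlgebra ℂ g] [FiniteDimensional ℂ g]
    [LieAlgebra.IsSemisimple ℂ g]
    (u : Submodule ℝ g)
    (hub : ∀ x ∈ u, ∀ y ∈ u, ⁅x, y⁆ ∈ u)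
    (J : g →ₗ[ℝ] g) (hJ : ∀ x : g, J x = (Complex.I : ℂ) • x)
    (hreal₁ : u ⊓ u.map J = ⊥) (hreal₂ : u ⊔ u.map J = ⊤)
    (hcompact : ∀ x ∈ u, x ≠ 0 →
      (killingForm ℂ g x x).re < 0 ∧ (killingForm ℂ g x x).im = 0)
    (θ : g →ₗ⁅ℂ⁆ g) (hθinv : ∀ x, θ (θ x) = x)
    (hθu : ∀ x ∈ u, θ x ∈ u)
    (k m : Submodule ℝ g)
    (hk : ∀ x : g, x ∈ k ↔ x ∈ u ∧ θ x = x)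
    (hm : ∀ x : g, x ∈ m ↔ x ∈ u ∧ θ x = -x) :
    let gθ := k ⊔ m.map J
    (∀ x ∈ gθ, ∀ y ∈ gθ, ⁅x, y⁆ ∈ gθ) ∧
    (gθ ⊓ gθ.map J = ⊥ ∧ gθ ⊔ gθ.map J = ⊤) ∧
    (∀ x ∈ gθ, x ≠ 0 →
      (killingForm ℂ g x (θ x)).re < 0 ∧ (killingForm ℂ g x (θ x)).im = 0) := by
  intro gθ
  -- basic facts
  have hJJ : ∀ x : g, J (J x) = -x := by
    intro x; rw [hJ, hJ, smul_smul, Complex.I_mul_I, neg_one_smul]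
  have hJinj : ∀ x : g, J x = 0 → x = 0 := by
    intro x h
    have := congrArg J h
    rw [hJJ, map_zero] at this
    exact neg_eq_zero.mp this
  have hθJ : ∀ x : g, θ (J x) = J (θ x) := by
    intro x; rw [hJ, hJ, map_smul]
  have hθR : ∀ (r : ℝ) (x : g), θ (r • x) = r • θ x := by
    intro r x
    rw [← algebraMap_smul ℂ r x, map_smul, algebraMap_smul]
  have hku : k ≤ u := fun x hx => ((hk x).mp hx).1
  have hmu : m ≤ u := fun x hx => ((hm x).mp hx).1
  have hkm0 : ∀ a : g, a ∈ k → a ∈ m → a = 0 := by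
    intro a hak ham
    have h1 := ((hk a).mp hak).2
    have h2 := ((hm a).mp ham).2
    have h3 : a = -a := h1.symm.trans h2
    have h4 : (2 : ℂ) • a = 0 := by
      rw [two_smul]; nth_rewrite 2 [h3]; exact add_neg_cancel a
    simpa using (smul_eq_zero.mp h4).resolve_left (by norm_num)
  have hmem : ∀ x : g, x ∈ gθ → ∃ a ∈ k, ∃ b ∈ m, x = a + J b := by
    intro x hx
    rcases Submodule.mem_sup.mp hx with ⟨a, ha, z, hz, hsum⟩
    rcases Submodule.mem_map.mp hz with ⟨b, hb, rfl⟩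
    exact ⟨a, ha, b, hb, hsum.symm⟩
  have hdec : ∀ x ∈ u, ∃ a ∈ k, ∃ b ∈ m, x = a + b := by
    intro x hx
    refine ⟨(2⁻¹ : ℝ) • (x + θ x), ?_, (2⁻¹ : ℝ) • (x - θ x), ?_, ?_⟩
    · refine (hk _).mpr ⟨u.smul_mem _ (u.add_mem hx (hθu x hx)), ?_⟩
      rw [hθR, map_add, hθinv, add_comm]
    · refine (hm _).mpr ⟨u.smul_mem _ (u.sub_mem hx (hθu x hx)), ?_⟩
      rw [hθR, map_sub, hθinv, ← smul_neg, neg_sub]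
    · module
  -- eigenspace facts
  have hθk : ∀ a ∈ k, θ a = a := fun a ha => ((hk a).mp ha).2
  have hθm : ∀ b ∈ m, θ b = -b := fun b hb => ((hm b).mp hb).2
  refine ⟨?_, ⟨?_, ?_⟩, ?_⟩
  · -- bracket closure
    intro x hx y hy
    obtain ⟨a, ha, b, hb, rfl⟩ := hmem x hx
    obtain ⟨c, hc, d, hd, rfl⟩ := hmem y hy
    have hlie : ⁅a + J b, c + J d⁆ = (⁅a, c⁆ - ⁅b, d⁆) + J (⁅a, d⁆ + ⁅b, c⁆) := by
      simp only [hJ, lie_add, add_lie, lie_smul, smul_lie, smul_smul, Complex.I_mul_I,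
        neg_one_smul, map_add, smul_add]
      module
    rw [hlie]
    have h1 : ⁅a, c⁆ - ⁅b, d⁆ ∈ k := by
      refine k.sub_mem ((hk _).mpr ⟨hub a (hku ha) c (hku hc), ?_⟩)
        ((hk _).mpr ⟨hub b (hmu hb) d (hmu hd), ?_⟩)
      · rw [LieHom.map_lie, hθk a ha, hθk c hc]
      · rw [LieHom.map_lie, hθm b hb, hθm d hd, neg_lie, lie_neg, neg_neg]
    have h2 : ⁅a, d⁆ + ⁅b, c⁆ ∈ m := by
      refine m.add_mem ((hm _).mpr ⟨hub a (hku ha) d (hmu hd), ?_⟩)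
        ((hm _).mpr ⟨hub b (hmu hb) c (hku hc), ?_⟩)
      · rw [LieHom.map_lie, hθk a ha, hθm d hd, lie_neg]
      · rw [LieHom.map_lie, hθm b hb, hθk c hc, neg_lie]
    exact Submodule.add_mem_sup h1 (Submodule.mem_map_of_mem h2)
  · -- intersection trivial
    rw [eq_bot_iff]
    intro x hx
    have hx1 := (Submodule.mem_inf.mp hx).1
    have hx2 := (Submodule.mem_inf.mp hx).2
    obtain ⟨a, ha, b, hb, hxe⟩ := hmem x hx1
    rcases Submodule.mem_map.mp hx2 with ⟨y, hy, hyx⟩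
    obtain ⟨c, hc, d, hd, rfl⟩ := hmem y hy
    have hyx' : a + J b = J c - d := by
      rw [hxe] at hyx
      rw [← hyx, map_add, hJJ, sub_eq_add_neg]
    have had : a + d = J (c - b) := by
      rw [map_sub]
      have h' : a + J b + d = J c := by rw [hyx']; abel
      rw [eq_sub_iff_add_eq]
      calc a + d + J b = a + J b + d := by abel
        _ = J c := h'
    have hadu : a + d ∈ u ⊓ u.map J :=
      Submodule.mem_inf.mpr ⟨u.add_mem (hku ha) (hmu hd),
        had ▸ Submodule.mem_map_of_mem (u.sub_mem (hku hc) (hmu hb))⟩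
    have had0 : a + d = 0 := by rw [hreal₁] at hadu; simpa using hadu
    have ha0 : a = 0 := hkm0 a ha (by
      have : a = -d := by linear_combination (norm := abel) had0
      rw [this]; exact m.neg_mem hd)
    have hd0 : d = 0 := by
      have : d = -a := by linear_combination (norm := abel) had0
      rw [this, ha0, neg_zero]
    have hbc : b = c := by
      have : J (b - c) = 0 := by
        rw [map_sub, sub_eq_zero]
        have := hyx'
        rw [ha0, hd0] at this
        simpa using this
      have := hJinj _ this
      rwa [sub_eq_zero] at this
    have hb0 : b = 0 := hkm0 b (hbc ▸ hc) hb
    simp [hxe, ha0, hb0]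
  · -- span is everything
    rw [eq_top_iff]
    intro x _
    have hx : x ∈ u ⊔ u.map J := hreal₂ ▸ Submodule.mem_top
    rcases Submodule.mem_sup.mp hx with ⟨p, hp, z, hz, hsum⟩
    rcases Submodule.mem_map.mp hz with ⟨q, hq, rfl⟩
    obtain ⟨a, ha, b, hb, rfl⟩ := hdec p hp
    obtain ⟨c, hc, d, hd, rfl⟩ := hdec q hq
    have hx' : x = (a + J d) + (b + J c) := by
      rw [← hsum, map_add]; abel
    have h1 : a + J d ∈ gθ := Submodule.add_mem_sup ha (Submodule.mem_map_of_mem hd)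
    have h2 : b + J c ∈ gθ.map J := by
      refine Submodule.mem_map.mpr ⟨c + J (-b),
        Submodule.add_mem_sup hc (Submodule.mem_map_of_mem (m.neg_mem hb)), ?_⟩
      rw [map_add, hJJ, neg_neg, add_comm]
    rw [hx']
    exact Submodule.add_mem_sup h1 h2
  · -- Cartan involution
    intro x hx hx0
    obtain ⟨a, ha, b, hb, rfl⟩ := hmem x hx
    have hθx : θ (a + J b) = a - J b := by
      rw [map_add, hθk a ha, hθJ, hθm b hb, map_neg, sub_eq_add_neg]
    have key : killingForm ℂ g (a + J b) (θ (a + J b)) =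
        killingForm ℂ g a a + killingForm ℂ g b b := by
      rw [hθx, hJ]
      simp only [map_add, map_sub, map_smul, LinearMap.add_apply, LinearMap.sub_apply,
        LinearMap.smul_apply, smul_eq_mul]
      rw [LieModule.traceForm_comm ℂ g g b a]
      ring_nf
      rw [Complex.I_sq]
      ring
    have hab : ¬(a = 0 ∧ b = 0) := by
      rintro ⟨rfl, rfl⟩
      simp at hx0
    have haa : (killingForm ℂ g a a).re ≤ 0 ∧ (killingForm ℂ g a a).im = 0 := by
      by_cases h : a = 0
      · simp [h]
      · exact ⟨(hcompact a (hku ha) h).1.le, (hcompact a (hku ha) h).2⟩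
    have hbb : (killingForm ℂ g b b).re ≤ 0 ∧ (killingForm ℂ g b b).im = 0 := by
      by_cases h : b = 0
      · simp [h]
      · exact ⟨(hcompact b (hmu hb) h).1.le, (hcompact b (hmu hb) h).2⟩
    have hstrict : (killingForm ℂ g a a).re < 0 ∨ (killingForm ℂ g b b).re < 0 := by
      by_cases h : a = 0
      · have hb0 : b ≠ 0 := fun hb0 => hab ⟨h, hb0⟩
        exact Or.inr (hcompact b (hmu hb) hb0).1
      · exact Or.inl (hcompact a (hku ha) h).1
    rw [key]
    constructor
    · rw [Complex.add_re]
      rcases hstrict with h | h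
      · linarith [hbb.1]
      · linarith [haa.1]
    · rw [Complex.add_im, haa.2, hbb.2, add_zero]
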